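/- Let R̂(ξ) be an a.e. Hermitian, non-negative definite matrix-valued function on ℝ^d with ∫_{ℝ^d} tr R̂(ξ) dξ < ∞, and let h(t,ξ) = ∫_0^∞ e^{−λt} μ(ξ,dλ) where μ(ξ,·) are finite non-negative Borel measures with ess sup_ξ μ(ξ,[0,∞)) < ∞ (with respect to 𝔯(dξ) = tr R̂(ξ)dξ). Then the matrix-valued function R_pq(t,x) := ∫_{ℝ^d} e^{i x·ξ} h(|t|,ξ) R̂_pq(ξ) dξ is non-negative definite: for every N ≥ 1, points (t_1,x_1),…,(t_N,x_N) ∈ ℝ^{1+d} and vectors η_1,…,η_N ∈ ℂ^d, Σ_{p,q=1}^N R(t_p − t_q, x_p − x_q) η_p · η̄_q ≥ 0. -/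

import Mathlib

open MeasureTheory
open scoped ComplexOrder

lemma integral_nonneg_cplx {α : Type*} [MeasurableSpace α] (μ : Measure α) (f : α → ℂ)
    (hf : ∀ᵐ x ∂μ, 0 ≤ f x) : 0 ≤ ∫ x, f x ∂μ := by
  by_cases hi : Integrable f μ
  · have hre := integral_re hi
    have him := integral_im hi
    simp only [RCLike.re_to_complex, RCLike.im_to_complex] at hre him
    rw [Complex.le_def, Complex.zero_re, Complex.zero_im, ← hre, ← him]
    constructor
    · refine integral_nonneg_of_ae ?_
      filter_upwards [hf] with x hx
      simpa using (Complex.le_def.mp hx).1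
    · rw [integral_eq_zero_of_ae]
      filter_upwards [hf] with x hx
      simpa using ((Complex.le_def.mp hx).2).symm
  · rw [integral_undef hi]

lemma exp_set_int (l m v : ℝ) (hmv : m ≤ v) :
    ∫ u in Set.Ioc m v, (2*l*Real.exp (2*l*u)) = Real.exp (2*l*v) - Real.exp (2*l*m) := by
  rw [← intervalIntegral.integral_of_le hmv]
  have hderiv : ∀ u ∈ Set.uIcc m v,
      HasDerivAt (fun u => Real.exp (2*l*u)) (2*l*Real.exp (2*l*u)) u := by
    intro u _
    have h1 : HasDerivAt (fun u : ℝ => 2*l*u) (2*l) u := by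
      simpa using (hasDerivAt_id u).const_mul (2*l)
    have := h1.exp
    convert this using 1
    ring
  rw [intervalIntegral.integral_eq_sub_of_hasDerivAt hderiv]
  exact (Continuous.intervalIntegrable (by continuity) m v)

lemma scalar_kernel_nonneg (l : ℝ) (hl : 0 ≤ l) {N : ℕ} (t : Fin N → ℝ) (c : Fin N → ℂ) :
    0 ≤ ∑ a, ∑ b, (Real.exp (-(l * |t a - t b|)) : ℂ) * (c a * (starRingEnd ℂ) (c b)) := by
  rcases isEmpty_or_nonempty (Fin N) with hN | hN
  · simp
  set g : ℝ → ℝ := fun u => 2*l*Real.exp (2*l*u) with hg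
  set m : ℝ := Finset.univ.inf' (Finset.univ_nonempty) t with hm
  have hmle : ∀ a, m ≤ t a := fun a => Finset.inf'_le _ (Finset.mem_univ a)
  set c' : Fin N → ℂ := fun a => c a * (Real.exp (-(l * t a)) : ℂ) with hc'
  set φ : Fin N → ℝ → ℝ := fun a u => Set.indicator (Set.Ioc m (t a)) (fun _ => (1:ℝ)) u with hφ
  -- integrability
  have hgint : ∀ v : ℝ, Integrable (Set.indicator (Set.Ioc m v) g) volume := by
    intro v
    refine (IntegrableOn.integrable_indicator ?_ measurableSet_Ioc)
    exact (Continuous.integrableOn_Ioc (by continuity))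
  have hindmul : ∀ a b, (Set.indicator (Set.Ioc m (min (t a) (t b))) g)
      = fun u => φ a u * φ b u * g u := by
    intro a b
    funext u
    by_cases ha : u ∈ Set.Ioc m (t a) <;> by_cases hb : u ∈ Set.Ioc m (t b)
    · have : u ∈ Set.Ioc m (min (t a) (t b)) := by
        simp only [Set.mem_Ioc] at *
        exact ⟨ha.1, le_min ha.2 hb.2⟩
      simp [hφ, Set.indicator_of_mem, ha, hb, this]
    · have : u ∉ Set.Ioc m (min (t a) (t b)) := by
        simp only [Set.mem_Ioc] at *
        intro hc
        exact hb ⟨hc.1, hc.2.trans (min_le_right _ _)⟩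
      simp [hφ, Set.indicator_of_mem, Set.indicator_of_notMem, ha, hb, this]
    · have : u ∉ Set.Ioc m (min (t a) (t b)) := by
        simp only [Set.mem_Ioc] at *
        intro hc
        exact ha ⟨hc.1, hc.2.trans (min_le_left _ _)⟩
      simp [hφ, Set.indicator_of_mem, Set.indicator_of_notMem, ha, hb, this]
    · have : u ∉ Set.Ioc m (min (t a) (t b)) := by
        simp only [Set.mem_Ioc] at *
        intro hc
        exact ha ⟨hc.1, hc.2.trans (min_le_left _ _)⟩
      simp [hφ, Set.indicator_of_mem, Set.indicator_of_notMem, ha, hb, this]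
  -- step 1: termwise identity
  have key : ∀ a b : Fin N,
      (Real.exp (-(l * |t a - t b|)) : ℂ) * (c a * (starRingEnd ℂ) (c b))
      = ((Real.exp (2*l*m) : ℝ) : ℂ) * (c' a * (starRingEnd ℂ) (c' b))
        + ((∫ u : ℝ, φ a u * φ b u * g u : ℝ) : ℂ) * (c' a * (starRingEnd ℂ) (c' b)) := by
    intro a b
    have hmin : m ≤ min (t a) (t b) := le_min (hmle a) (hmle b)
    have hI : (∫ u : ℝ, φ a u * φ b u * g u)
        = Real.exp (2*l*(min (t a) (t b))) - Real.exp (2*l*m) := by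
      rw [← hindmul a b, integral_indicator measurableSet_Ioc]
      exact exp_set_int l m _ hmin
    have hcon : (starRingEnd ℂ) (c' b) = (starRingEnd ℂ) (c b) * (Real.exp (-(l * t b)) : ℂ) := by
      simp only [hc', map_mul, Complex.conj_ofReal]
    have hexp : (Real.exp (-(l * |t a - t b|)) : ℝ)
        = Real.exp (2*l*(min (t a) (t b))) * Real.exp (-(l * t a)) * Real.exp (-(l * t b)) := by
      rw [← Real.exp_add, ← Real.exp_add]
      congr 1
      rcases le_total (t a) (t b) with hab | hab
      · rw [min_eq_left hab, abs_of_nonpos (by linarith)]; ring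
      · rw [min_eq_right hab, abs_of_nonneg (by linarith)]; ring
    rw [hI, ← add_mul, ← Complex.ofReal_add,
      show Real.exp (2*l*m) + (Real.exp (2*l*(min (t a) (t b))) - Real.exp (2*l*m))
        = Real.exp (2*l*(min (t a) (t b))) from by ring,
      hexp, Complex.ofReal_mul, Complex.ofReal_mul, hcon]
    simp only [hc']
    ring
  rw [Finset.sum_congr rfl (fun a _ => Finset.sum_congr rfl (fun b _ => key a b))]
  simp only [Finset.sum_add_distrib]
  apply add_nonneg
  · -- constant part
    have : ∑ a, ∑ b, ((Real.exp (2*l*m) : ℝ) : ℂ) * (c' a * (starRingEnd ℂ) (c' b))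
        = ((Real.exp (2*l*m) : ℝ) : ℂ) * ((∑ a, c' a) * (starRingEnd ℂ) (∑ b, c' b)) := by
      rw [map_sum, Finset.sum_mul_sum]
      simp [Finset.mul_sum]
    rw [this, Complex.mul_conj]
    exact mul_nonneg (Complex.zero_le_real.mpr (Real.exp_pos _).le)
      (Complex.zero_le_real.mpr (Complex.normSq_nonneg _))
  · -- integral part
    have heq : ∀ a b : Fin N,
        ((∫ u : ℝ, φ a u * φ b u * g u : ℝ) : ℂ) * (c' a * (starRingEnd ℂ) (c' b))
        = ∫ u : ℝ, (((φ a u * φ b u * g u : ℝ)) : ℂ) * (c' a * (starRingEnd ℂ) (c' b)) := by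
      intro a b
      rw [integral_mul_const,
        show (∫ u : ℝ, (((φ a u * φ b u * g u : ℝ)) : ℂ))
          = ((∫ u : ℝ, φ a u * φ b u * g u : ℝ) : ℂ) from integral_ofReal]
    have hint : ∀ a b : Fin N, Integrable
        (fun u : ℝ => (((φ a u * φ b u * g u : ℝ)) : ℂ) * (c' a * (starRingEnd ℂ) (c' b)))
        volume := by
      intro a b
      refine Integrable.mul_const ?_ _
      refine Integrable.ofReal ?_
      have := hgint (min (t a) (t b))
      rwa [hindmul a b] at this
    calc (0:ℂ)
        ≤ ∫ u : ℝ, ∑ a, ∑ b,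
            (((φ a u * φ b u * g u : ℝ)) : ℂ) * (c' a * (starRingEnd ℂ) (c' b)) := by
          refine integral_nonneg_cplx _ _ (Filter.Eventually.of_forall fun u => ?_)
          have : ∑ a, ∑ b, (((φ a u * φ b u * g u : ℝ)) : ℂ) * (c' a * (starRingEnd ℂ) (c' b))
              = ((g u : ℝ) : ℂ) * ((∑ a, (φ a u : ℂ) * c' a)
                * (starRingEnd ℂ) (∑ b, (φ b u : ℂ) * c' b)) := by
            rw [map_sum, Finset.sum_mul_sum, Finset.mul_sum]
            refine Finset.sum_congr rfl fun a _ => ?_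
            rw [Finset.mul_sum]
            refine Finset.sum_congr rfl fun b _ => ?_
            simp only [map_mul, Complex.conj_ofReal]
            push_cast
            ring
          rw [this, Complex.mul_conj]
          have h1 : (0:ℂ) ≤ ((g u : ℝ) : ℂ) := by
            refine Complex.zero_le_real.mpr ?_
            exact mul_nonneg (mul_nonneg (by norm_num) hl) (Real.exp_pos _).le
          exact mul_nonneg h1 (Complex.zero_le_real.mpr (Complex.normSq_nonneg _))
      _ = ∑ a, ∑ b, ∫ u : ℝ,
            (((φ a u * φ b u * g u : ℝ)) : ℂ) * (c' a * (starRingEnd ℂ) (c' b)) := by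
          rw [integral_finset_sum _ (fun a _ => integrable_finset_sum _ (fun b _ => hint a b))]
          exact Finset.sum_congr rfl fun a _ => integral_finset_sum _ (fun b _ => hint a b)
      _ = ∑ a, ∑ b, ((∫ u : ℝ, φ a u * φ b u * g u : ℝ) : ℂ)
            * (c' a * (starRingEnd ℂ) (c' b)) := by
          exact Finset.sum_congr rfl fun a _ => Finset.sum_congr rfl fun b _ => (heq a b).symm

lemma matrix_kernel_nonneg (l : ℝ) (hl : 0 ≤ l) {d N : ℕ} (A : Matrix (Fin d) (Fin d) ℂ)
    (hA : A.PosSemidef) (t : Fin N → ℝ) (v : Fin N → Fin d → ℂ) :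
    0 ≤ ∑ a, ∑ b, ∑ p, ∑ q,
      (Real.exp (-(l * |t a - t b|)) : ℂ) * A p q * v a p * (starRingEnd ℂ) (v b q) := by
  obtain ⟨B, hB⟩ : ∃ B : Matrix (Fin d) (Fin d) ℂ, A = B.conjTranspose * B := by
    classical
    open scoped MatrixOrder Matrix.Norms.L2Operator in
    exact CStarAlgebra.nonneg_iff_eq_star_mul_self.mp hA.nonneg
  set w : Fin d → Fin N → ℂ := fun r a => ∑ p, (starRingEnd ℂ) (B r p) * v a p with hw
  have hApq : ∀ p q, A p q = ∑ r, (starRingEnd ℂ) (B r p) * B r q := by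
    intro p q
    rw [hB, Matrix.mul_apply]
    simp only [Matrix.conjTranspose_apply, Complex.star_def]
  have hconjw : ∀ r b, (starRingEnd ℂ) (w r b) = ∑ q, B r q * (starRingEnd ℂ) (v b q) := by
    intro r b
    rw [hw]
    simp only [map_sum, map_mul, Complex.conj_conj]
  have step : ∀ a b : Fin N,
      (∑ p, ∑ q, (Real.exp (-(l * |t a - t b|)) : ℂ) * A p q * v a p * (starRingEnd ℂ) (v b q))
      = ∑ r, (Real.exp (-(l * |t a - t b|)) : ℂ) * (w r a * (starRingEnd ℂ) (w r b)) := by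
    intro a b
    set E : ℂ := (Real.exp (-(l * |t a - t b|)) : ℂ) with hE
    calc (∑ p, ∑ q, E * A p q * v a p * (starRingEnd ℂ) (v b q))
        = ∑ p, ∑ q, ∑ r, E * (((starRingEnd ℂ) (B r p) * v a p)
            * (B r q * (starRingEnd ℂ) (v b q))) := by
          refine Finset.sum_congr rfl fun p _ => Finset.sum_congr rfl fun q _ => ?_
          rw [hApq p q, Finset.mul_sum, Finset.sum_mul, Finset.sum_mul]
          exact Finset.sum_congr rfl fun r _ => by ring
      _ = ∑ r, ∑ p, ∑ q, E * (((starRingEnd ℂ) (B r p) * v a p)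
            * (B r q * (starRingEnd ℂ) (v b q))) := by
          rw [show (∑ p, ∑ q, ∑ r, E * (((starRingEnd ℂ) (B r p) * v a p)
                * (B r q * (starRingEnd ℂ) (v b q))))
              = ∑ p, ∑ r, ∑ q, E * (((starRingEnd ℂ) (B r p) * v a p)
                * (B r q * (starRingEnd ℂ) (v b q)))
            from Finset.sum_congr rfl fun p _ => Finset.sum_comm]
          exact Finset.sum_comm
      _ = ∑ r, E * (w r a * (starRingEnd ℂ) (w r b)) := by
          refine Finset.sum_congr rfl fun r _ => ?_
          rw [hconjw, hw]
          rw [Finset.sum_mul_sum, Finset.mul_sum]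
          refine Finset.sum_congr rfl fun p _ => ?_
          rw [Finset.mul_sum]
  rw [Finset.sum_congr rfl fun a _ => Finset.sum_congr rfl fun b _ => step a b]
  rw [show (∑ a : Fin N, ∑ b : Fin N, ∑ r : Fin d,
        (Real.exp (-(l * |t a - t b|)) : ℂ) * (w r a * (starRingEnd ℂ) (w r b)))
      = ∑ a : Fin N, ∑ r : Fin d, ∑ b : Fin N,
        (Real.exp (-(l * |t a - t b|)) : ℂ) * (w r a * (starRingEnd ℂ) (w r b))
    from Finset.sum_congr rfl fun a _ => Finset.sum_comm, Finset.sum_comm]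
  exact Finset.sum_nonneg fun r _ => scalar_kernel_nonneg l hl t (fun a => w r a)

lemma psd_diag_re_sum {d : ℕ} {A : Matrix (Fin d) (Fin d) ℂ} (hA : A.PosSemidef) :
    (∀ s, 0 ≤ (A s s).re) ∧ A.trace.re = ∑ s, (A s s).re := by
  obtain ⟨B, hB⟩ : ∃ B : Matrix (Fin d) (Fin d) ℂ, A = B.conjTranspose * B := by
    classical
    open scoped MatrixOrder Matrix.Norms.L2Operator in
    exact CStarAlgebra.nonneg_iff_eq_star_mul_self.mp hA.nonneg
  have hApq : ∀ p q, A p q = ∑ r, (starRingEnd ℂ) (B r p) * B r q := by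
    intro p q
    rw [hB, Matrix.mul_apply]
    simp only [Matrix.conjTranspose_apply, Complex.star_def]
  have hdiag : ∀ s, (A s s).re = ∑ r, ‖B r s‖^2 := by
    intro s
    rw [hApq s s, Complex.re_sum]
    refine Finset.sum_congr rfl fun r _ => ?_
    rw [mul_comm, Complex.mul_conj, Complex.normSq_eq_norm_sq,
      Complex.ofReal_re]
  refine ⟨fun s => by rw [hdiag]; positivity, ?_⟩
  rw [Matrix.trace, Complex.re_sum]; rfl

lemma psd_trace_re_nonneg {d : ℕ} {A : Matrix (Fin d) (Fin d) ℂ} (hA : A.PosSemidef) :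
    0 ≤ A.trace.re := by
  obtain ⟨h1, h2⟩ := psd_diag_re_sum hA
  rw [h2]
  exact Finset.sum_nonneg fun s _ => h1 s

lemma psd_entry_norm_le {d : ℕ} {A : Matrix (Fin d) (Fin d) ℂ} (hA : A.PosSemidef) (p q : Fin d) :
    ‖A p q‖ ≤ A.trace.re := by
  obtain ⟨B, hB⟩ : ∃ B : Matrix (Fin d) (Fin d) ℂ, A = B.conjTranspose * B := by
    classical
    open scoped MatrixOrder Matrix.Norms.L2Operator in
    exact CStarAlgebra.nonneg_iff_eq_star_mul_self.mp hA.nonneg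
  have hApq : ∀ p q, A p q = ∑ r, (starRingEnd ℂ) (B r p) * B r q := by
    intro p q
    rw [hB, Matrix.mul_apply]
    simp only [Matrix.conjTranspose_apply, Complex.star_def]
  have hdiag : ∀ s, (A s s).re = ∑ r, ‖B r s‖^2 := by
    intro s
    rw [hApq s s, Complex.re_sum]
    refine Finset.sum_congr rfl fun r _ => ?_
    rw [mul_comm, Complex.mul_conj, Complex.normSq_eq_norm_sq,
      Complex.ofReal_re]
  obtain ⟨hdnn, htr⟩ := psd_diag_re_sum hA
  have hle : ∀ s, (A s s).re ≤ A.trace.re := fun s => by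
    rw [htr]; exact Finset.single_le_sum (fun i _ => hdnn i) (Finset.mem_univ s)
  have h1 : ‖A p q‖ ≤ ((A p p).re + (A q q).re)/2 := by
    rw [hApq p q, hdiag, hdiag]
    calc ‖∑ r, (starRingEnd ℂ) (B r p) * B r q‖
        ≤ ∑ r, ‖(starRingEnd ℂ) (B r p) * B r q‖ := norm_sum_le _ _
      _ ≤ ∑ r, (‖B r p‖^2 + ‖B r q‖^2)/2 := by
          refine Finset.sum_le_sum fun r _ => ?_
          rw [norm_mul, RCLike.norm_conj]
          nlinarith [two_mul_le_add_sq ‖B r p‖ ‖B r q‖]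
      _ = (∑ r, ‖B r p‖^2 + ∑ r, ‖B r q‖^2)/2 := by
          rw [← Finset.sum_add_distrib, Finset.sum_div]
  linarith [hle p, hle q, h1]

/-- Let `R̂` be a.e. Hermitian non-negative definite with integrable trace,
and let `h(t,ξ) = ∫_0^∞ e^{-λ t} μ(ξ,dλ)` for finite non-negative Borel measures `μ(ξ,·)` on
`[0,∞)` with `esssup_ξ μ(ξ,[0,∞)) < ∞` (w.r.t. `𝔯(dξ) = tr R̂(ξ) dξ`).  Then
`R_pq(t,x) := ∫ e^{i x·ξ} h(|t|,ξ) R̂_pq(ξ) dξ` is non-negative definite: for all `N`, points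
`(t_a, x_a)` and vectors `η_a ∈ ℂ^d`, `Σ_{a,b} R(t_a - t_b, x_a - x_b) η_a · conj η_b ≥ 0`. -/
theorem covariance_nonneg_definite_of_completely_monotone
    (d : ℕ) (Rh : (Fin d → ℝ) → Matrix (Fin d) (Fin d) ℂ)
    (hRhMeas : ∀ p q, Measurable fun ξ : Fin d → ℝ => Rh ξ p q)
    (hRh : ∀ᵐ ξ : Fin d → ℝ, (Rh ξ).PosSemidef)
    (hRhInt : Integrable fun ξ : Fin d → ℝ => (Rh ξ).trace.re)
    (frakr : Measure (Fin d → ℝ))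
    (hfrakr : frakr = volume.withDensity fun ξ => ENNReal.ofReal ((Rh ξ).trace.re))
    (μ : (Fin d → ℝ) → Measure ℝ) (hμfin : ∀ ξ, IsFiniteMeasure (μ ξ))
    (hμpos : ∀ᵐ ξ ∂frakr, (μ ξ) (Set.Iio 0) = 0)
    (M : ℝ) (hM : ∀ᵐ ξ ∂frakr, ((μ ξ) Set.univ).toReal ≤ M)
    (h : ℝ → (Fin d → ℝ) → ℝ)
    (hhMeas : Measurable (Function.uncurry h))
    (hh : ∀ t ξ, h t ξ = ∫ l, Real.exp (-(l * t)) ∂(μ ξ))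
    (R : ℝ → (Fin d → ℝ) → Matrix (Fin d) (Fin d) ℂ)
    (hR : ∀ t x p q, R t x p q
      = ∫ ξ, Complex.exp (Complex.I * ((∑ i, x i * ξ i : ℝ) : ℂ))
          * ((h |t| ξ : ℝ) : ℂ) * Rh ξ p q) :
    ∀ (N : ℕ) (t : Fin N → ℝ) (x : Fin N → Fin d → ℝ) (η : Fin N → Fin d → ℂ),
      0 ≤ ∑ a, ∑ b, ∑ p, ∑ q,
        R (t a - t b) (x a - x b) p q * η a p * (starRingEnd ℂ) (η b q) := by
  intro N t x η
  -- measurability of the density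
  have htrMeas : Measurable fun ξ => (Rh ξ).trace.re := by
    have h1 : Measurable fun ξ => (Rh ξ).trace := by
      simp only [Matrix.trace, Matrix.diag]
      exact Finset.measurable_sum _ fun i _ => hRhMeas i i
    exact Complex.measurable_re.comp h1
  have hmeasρ : Measurable fun ξ => ENNReal.ofReal ((Rh ξ).trace.re) :=
    ENNReal.measurable_ofReal.comp htrMeas
  -- the a.e. (volume) facts
  rw [hfrakr] at hμpos hM
  have key_ae : ∀ᵐ ξ : Fin d → ℝ, (Rh ξ).PosSemidef ∧
      (ENNReal.ofReal ((Rh ξ).trace.re) ≠ 0 →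
        ((μ ξ) (Set.Iio 0) = 0 ∧ ((μ ξ) Set.univ).toReal ≤ M)) := by
    have h2 := (ae_withDensity_iff hmeasρ).mp hμpos
    have h3 := (ae_withDensity_iff hmeasρ).mp hM
    filter_upwards [hRh, h2, h3] with ξ hp ha hb
    exact ⟨hp, fun hne => ⟨ha hne, hb hne⟩⟩
  -- the integrand
  set F : Fin N → Fin N → Fin d → Fin d → (Fin d → ℝ) → ℂ := fun a b p q ξ =>
    Complex.exp (Complex.I * ((∑ i, (x a - x b) i * ξ i : ℝ) : ℂ))
      * ((h |t a - t b| ξ : ℝ) : ℂ) * Rh ξ p q * (η a p * (starRingEnd ℂ) (η b q)) with hF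
  -- h is nonnegative
  have hh_nonneg : ∀ s ξ, 0 ≤ h s ξ := fun s ξ => by
    rw [hh]; exact integral_nonneg fun l => (Real.exp_pos _).le
  -- h is bounded by M at good points
  have hhle : ∀ ξ, (μ ξ) (Set.Iio 0) = 0 → ((μ ξ) Set.univ).toReal ≤ M →
      ∀ s : ℝ, 0 ≤ s → h s ξ ≤ M := by
    intro ξ hz hM' s hs
    rw [hh]
    have hae : ∀ᵐ l ∂(μ ξ), 0 ≤ l := by
      rw [ae_iff]
      have : {l : ℝ | ¬ 0 ≤ l} = Set.Iio 0 := by ext l; simp [not_le]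
      rw [this]; exact hz
    have hb : ∫ l, Real.exp (-(l*s)) ∂(μ ξ) ≤ ∫ _, (1:ℝ) ∂(μ ξ) := by
      refine integral_mono_of_nonneg
        (Filter.Eventually.of_forall fun l => (Real.exp_pos _).le)
        (integrable_const 1) ?_
      filter_upwards [hae] with l hl
      rw [Real.exp_le_one_iff]
      simpa using mul_nonneg hl hs
    have h1 : ∫ _, (1:ℝ) ∂(μ ξ) = ((μ ξ) Set.univ).toReal := by
      simp [integral_const, Measure.real_def]
    rw [h1] at hb
    linarith
  -- measurability of F
  have hmeasF : ∀ a b p q, AEStronglyMeasurable (F a b p q) volume := by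
    intro a b p q
    have m1 : Measurable fun ξ : Fin d → ℝ =>
        Complex.exp (Complex.I * ((∑ i, (x a - x b) i * ξ i : ℝ) : ℂ)) := by
      refine Complex.measurable_exp.comp ?_
      refine Measurable.const_mul ?_ Complex.I
      exact Complex.measurable_ofReal.comp
        (Finset.measurable_sum _ fun i _ => (measurable_pi_apply i).const_mul _)
    have m2 : Measurable fun ξ : Fin d → ℝ => ((h |t a - t b| ξ : ℝ) : ℂ) :=
      Complex.measurable_ofReal.comp (hhMeas.comp measurable_prodMk_left)
    exact ((((m1.mul m2).mul (hRhMeas p q)).mul_const _)).aestronglyMeasurable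
  -- integrability of F
  have hintF : ∀ a b p q, Integrable (F a b p q) volume := by
    intro a b p q
    set C : ℝ := ‖η a p * (starRingEnd ℂ) (η b q)‖ with hC
    set M' : ℝ := max M 0 with hM'
    refine Integrable.mono' ((hRhInt.const_mul (M' * C))) (hmeasF a b p q) ?_
    filter_upwards [key_ae] with ξ hξ
    obtain ⟨hpsd, hgood⟩ := hξ
    have htrnn : 0 ≤ (Rh ξ).trace.re := psd_trace_re_nonneg hpsd
    have hnorm : ‖F a b p q ξ‖ = h |t a - t b| ξ * ‖Rh ξ p q‖ * C := by
      rw [hF]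
      simp only [norm_mul, Complex.norm_exp]
      have hre0 : (Complex.I * ((∑ i, (x a - x b) i * ξ i : ℝ) : ℂ)).re = 0 := by simp
      rw [hre0, Real.exp_zero, Complex.norm_real, Real.norm_eq_abs, abs_of_nonneg (hh_nonneg _ _),
        Complex.norm_conj, hC, norm_mul,
        Complex.norm_conj]
      ring
    rw [hnorm]
    by_cases hne : ENNReal.ofReal ((Rh ξ).trace.re) = 0
    · have h0 : (Rh ξ).trace.re = 0 :=
        le_antisymm (ENNReal.ofReal_eq_zero.mp hne) htrnn
      have hz : ‖Rh ξ p q‖ = 0 :=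
        le_antisymm (h0 ▸ psd_entry_norm_le hpsd p q) (norm_nonneg _)
      rw [hz, h0]
      simp
    · obtain ⟨hz, hMle⟩ := hgood hne
      have h1 : h |t a - t b| ξ ≤ M' :=
        le_trans (hhle ξ hz hMle _ (abs_nonneg _)) (le_max_left _ _)
      have h2 : ‖Rh ξ p q‖ ≤ (Rh ξ).trace.re := psd_entry_norm_le hpsd p q
      have h3 : 0 ≤ h |t a - t b| ξ := hh_nonneg _ _
      have h4 : (0:ℝ) ≤ C := norm_nonneg _
      have h5 : (0:ℝ) ≤ M' := le_max_right _ _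
      calc h |t a - t b| ξ * ‖Rh ξ p q‖ * C ≤ M' * ‖Rh ξ p q‖ * C :=
            mul_le_mul_of_nonneg_right (mul_le_mul_of_nonneg_right h1 (norm_nonneg _)) h4
        _ ≤ M' * (Rh ξ).trace.re * C :=
            mul_le_mul_of_nonneg_right (mul_le_mul_of_nonneg_left h2 h5) h4
        _ = M' * C * (Rh ξ).trace.re := by ring
  -- rewrite each term as an integral
  have hterm : ∀ a b p q, R (t a - t b) (x a - x b) p q * η a p * (starRingEnd ℂ) (η b q)
      = ∫ ξ, F a b p q ξ := by
    intro a b p q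
    rw [hR, mul_assoc, ← integral_mul_const]
  rw [Finset.sum_congr rfl fun a _ => Finset.sum_congr rfl fun b _ =>
    Finset.sum_congr rfl fun p _ => Finset.sum_congr rfl fun q _ => hterm a b p q]
  -- combine into one integral
  have hcomb : ∑ a, ∑ b, ∑ p, ∑ q, (∫ ξ, F a b p q ξ)
      = ∫ ξ, ∑ a, ∑ b, ∑ p, ∑ q, F a b p q ξ := by
    rw [integral_finset_sum _ fun a _ => integrable_finset_sum _ fun b _ =>
      integrable_finset_sum _ fun p _ => integrable_finset_sum _ fun q _ => hintF a b p q]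
    refine Finset.sum_congr rfl fun a _ => ?_
    rw [integral_finset_sum _ fun b _ =>
      integrable_finset_sum _ fun p _ => integrable_finset_sum _ fun q _ => hintF a b p q]
    refine Finset.sum_congr rfl fun b _ => ?_
    rw [integral_finset_sum _ fun p _ => integrable_finset_sum _ fun q _ => hintF a b p q]
    refine Finset.sum_congr rfl fun p _ => ?_
    rw [integral_finset_sum _ fun q _ => hintF a b p q]
  rw [hcomb]
  refine integral_nonneg_cplx _ _ ?_
  filter_upwards [key_ae] with ξ hξ
  obtain ⟨hpsd, hgood⟩ := hξ
  by_cases hne : ENNReal.ofReal ((Rh ξ).trace.re) = 0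
  · -- all entries vanish
    have h0 : (Rh ξ).trace.re = 0 :=
      le_antisymm (ENNReal.ofReal_eq_zero.mp hne) (psd_trace_re_nonneg hpsd)
    have hz : ∀ p q, Rh ξ p q = 0 := fun p q => norm_eq_zero.mp
      (le_antisymm (h0 ▸ psd_entry_norm_le hpsd p q) (norm_nonneg _))
    refine le_of_eq (Finset.sum_eq_zero fun a _ => Finset.sum_eq_zero fun b _ =>
      Finset.sum_eq_zero fun p _ => Finset.sum_eq_zero fun q _ => ?_).symm
    simp only [hF, hz p q]
    ring
  · obtain ⟨hz, hMle⟩ := hgood hne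
    have hμae : ∀ᵐ l ∂(μ ξ), 0 ≤ l := by
      rw [ae_iff]
      have : {l : ℝ | ¬ 0 ≤ l} = Set.Iio 0 := by ext l; simp [not_le]
      rw [this]; exact hz
    -- λ-integrands are integrable
    have hexpint : ∀ (c : ℂ) (s' : ℝ), 0 ≤ s' → Integrable (fun l : ℝ =>
        ((Real.exp (-(l * s')) : ℝ) : ℂ) * c) (μ ξ) := by
      intro c s' hs'
      refine Integrable.mono' (integrable_const ‖c‖) ?_ ?_
      · refine Measurable.aestronglyMeasurable ?_
        refine Measurable.mul_const ?_ c
        exact Complex.measurable_ofReal.comp (Real.measurable_exp.comp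
          ((measurable_id.mul_const s').neg))
      · filter_upwards [hμae] with l hl
        rw [norm_mul, Complex.norm_real, Real.norm_eq_abs,
          abs_of_nonneg (Real.exp_pos _).le]
        have he1 : Real.exp (-(l * s')) ≤ 1 := by
          rw [Real.exp_le_one_iff]; simpa using mul_nonneg hl hs'
        nlinarith [norm_nonneg c]
    -- rewrite each term as a λ-integral
    have hterm2 : ∀ (a b : Fin N) (p q : Fin d), F a b p q ξ
        = ∫ l, ((Real.exp (-(l * |t a - t b|)) : ℝ) : ℂ) *
            (Complex.exp (Complex.I * ((∑ i, (x a - x b) i * ξ i : ℝ) : ℂ))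
              * Rh ξ p q * (η a p * (starRingEnd ℂ) (η b q))) ∂(μ ξ) := by
      intro a b p q
      simp only [hF]
      rw [hh,
        show ((∫ l, Real.exp (-(l * |t a - t b|)) ∂(μ ξ) : ℝ) : ℂ)
          = ∫ l, ((Real.exp (-(l * |t a - t b|)) : ℝ) : ℂ) ∂(μ ξ) from integral_ofReal.symm,
        show Complex.exp (Complex.I * ((∑ i, (x a - x b) i * ξ i : ℝ) : ℂ))
            * (∫ l, ((Real.exp (-(l * |t a - t b|)) : ℝ) : ℂ) ∂(μ ξ)) * Rh ξ p q
            * (η a p * (starRingEnd ℂ) (η b q))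
          = (∫ l, ((Real.exp (-(l * |t a - t b|)) : ℝ) : ℂ) ∂(μ ξ))
            * (Complex.exp (Complex.I * ((∑ i, (x a - x b) i * ξ i : ℝ) : ℂ))
              * Rh ξ p q * (η a p * (starRingEnd ℂ) (η b q))) from by ring,
        ← integral_mul_const]
    rw [Finset.sum_congr rfl fun a _ => Finset.sum_congr rfl fun b _ =>
      Finset.sum_congr rfl fun p _ => Finset.sum_congr rfl fun q _ => hterm2 a b p q]
    have hint2 : ∀ (a b : Fin N) (p q : Fin d), Integrable (fun l : ℝ =>
        ((Real.exp (-(l * |t a - t b|)) : ℝ) : ℂ) *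
          (Complex.exp (Complex.I * ((∑ i, (x a - x b) i * ξ i : ℝ) : ℂ))
            * Rh ξ p q * (η a p * (starRingEnd ℂ) (η b q)))) (μ ξ) :=
      fun a b p q => hexpint _ _ (abs_nonneg _)
    have hcomb2 : ∑ a, ∑ b, ∑ p, ∑ q, (∫ l, ((Real.exp (-(l * |t a - t b|)) : ℝ) : ℂ) *
          (Complex.exp (Complex.I * ((∑ i, (x a - x b) i * ξ i : ℝ) : ℂ))
            * Rh ξ p q * (η a p * (starRingEnd ℂ) (η b q))) ∂(μ ξ))
        = ∫ l, ∑ a, ∑ b, ∑ p, ∑ q, ((Real.exp (-(l * |t a - t b|)) : ℝ) : ℂ) *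
          (Complex.exp (Complex.I * ((∑ i, (x a - x b) i * ξ i : ℝ) : ℂ))
            * Rh ξ p q * (η a p * (starRingEnd ℂ) (η b q))) ∂(μ ξ) := by
      rw [integral_finset_sum _ fun a _ => integrable_finset_sum _ fun b _ =>
        integrable_finset_sum _ fun p _ => integrable_finset_sum _ fun q _ => hint2 a b p q]
      refine Finset.sum_congr rfl fun a _ => ?_
      rw [integral_finset_sum _ fun b _ =>
        integrable_finset_sum _ fun p _ => integrable_finset_sum _ fun q _ => hint2 a b p q]
      refine Finset.sum_congr rfl fun b _ => ?_
      rw [integral_finset_sum _ fun p _ => integrable_finset_sum _ fun q _ => hint2 a b p q]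
      refine Finset.sum_congr rfl fun p _ => ?_
      rw [integral_finset_sum _ fun q _ => hint2 a b p q]
    rw [hcomb2]
    refine integral_nonneg_cplx _ _ ?_
    filter_upwards [hμae] with l hl
    -- phases
    set v : Fin N → Fin d → ℂ :=
      fun a p => Complex.exp (Complex.I * ((∑ i, x a i * ξ i : ℝ) : ℂ)) * η a p with hv
    have hphase : ∀ a b : Fin N,
        Complex.exp (Complex.I * ((∑ i, (x a - x b) i * ξ i : ℝ) : ℂ))
        = Complex.exp (Complex.I * ((∑ i, x a i * ξ i : ℝ) : ℂ)) *
          (starRingEnd ℂ) (Complex.exp (Complex.I * ((∑ i, x b i * ξ i : ℝ) : ℂ))) := by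
      intro a b
      rw [← Complex.exp_conj, ← Complex.exp_add]
      congr 1
      have hsub : ∑ i, (x a - x b) i * ξ i
          = (∑ i, x a i * ξ i) - ∑ i, x b i * ξ i := by
        simp only [Pi.sub_apply, sub_mul]
        rw [Finset.sum_sub_distrib]
      rw [hsub]
      simp only [map_mul, Complex.conj_ofReal, Complex.conj_I]
      push_cast
      ring
    have hfinal := matrix_kernel_nonneg l hl (Rh ξ) hpsd t v
    refine le_trans hfinal (le_of_eq ?_)
    refine Finset.sum_congr rfl fun a _ => Finset.sum_congr rfl fun b _ =>
      Finset.sum_congr rfl fun p _ => Finset.sum_congr rfl fun q _ => ?_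
    rw [hphase a b]
    simp only [hv, map_mul]
    ring
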